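/- Let Γ be a countably infinite group with a proper right-invariant metric d, and let P be a Γ-ideal. If the shift action of Γ on ℕ^Γ admits a Baire measurable P-coloring (i.e., a Baire measurable Col(P)-coloring), then there is an extendable Γ-ideal P' ⊆ P with the join property. -/

import Mathlib

open Set Function Topology

namespace DescColor

/-- A set is *Baire measurable* if it differs from an open set by a meager set. -/
def BaireMSet {X : Type*} [TopologicalSpace X] (S : Set X) : Prop :=
  ∃ U : Set X, IsOpen U ∧ IsMeagre (symmDiff S U)

/-- A function is *Baire measurable* if preimages of measurable (Borel) sets are
Baire measurable. -/
def BaireMFun {X Y : Type*} [TopologicalSpace X] [MeasurableSpace Y] (f : X → Y) : Prop :=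
  ∀ B : Set Y, MeasurableSet B → BaireMSet (f ⁻¹' B)

variable {Γ : Type*}

/-- The shift action of `Γ` on colorings `Γ → ℕ`: `(γ · ω)(δ) = ω (δ γ)`. -/
def shift [Group Γ] (γ : Γ) (ω : Γ → ℕ) : Γ → ℕ := fun δ => ω (δ * γ)

/-- A subshift: a closed shift-invariant set of colorings. -/
def IsSubshift [Group Γ] (Ω : Set (Γ → ℕ)) : Prop :=
  IsClosed Ω ∧ ∀ (γ : Γ), ∀ ω ∈ Ω, shift γ ω ∈ Ω

/-- The coding map `π_f(x)(γ) = f (γ • x)`. -/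
def codingMap [Group Γ] {X : Type*} [MulAction Γ X] (f : X → ℕ) (x : X) : Γ → ℕ :=
  fun γ => f (γ • x)

/-- The action of `Γ` on `X` admits a Baire measurable `Ω`-coloring. -/
def HasBMColoring [Group Γ] (X : Type*) [TopologicalSpace X] [MulAction Γ X]
    (Ω : Set (Γ → ℕ)) : Prop :=
  ∃ f : X → ℕ, BaireMFun f ∧ {x : X | codingMap f x ∈ Ω} ∈ residual X

/-- The action of `Γ` on `X` is generically smooth. -/
def GenSmooth (Γ : Type*) [Group Γ] (X : Type*) [TopologicalSpace X] [MulAction Γ X] : Prop :=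
  ∃ f : X → ℝ, BaireMFun f ∧ ∀ x y : X, f x = f y ↔ ∃ γ : Γ, γ • x = y

/-- The shift action of `Γ` on `ℕ^Γ` admits a Baire measurable `Ω`-coloring. -/
def ShiftHasBMColoring (Γ : Type*) [Group Γ] (Ω : Set (Γ → ℕ)) : Prop :=
  ∃ f : (Γ → ℕ) → ℕ, BaireMFun f ∧
    {ω : Γ → ℕ | (fun γ : Γ => f (shift γ ω)) ∈ Ω} ∈ residual (Γ → ℕ)

/-- A free continuous action of `Γ` on a Polish space. -/
structure FreePolishAction (Γ : Type*) [Group Γ] where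
  X : Type
  ts : TopologicalSpace X
  polish : @PolishSpace X ts
  smul : Γ → X → X
  one_smul' : ∀ x, smul 1 x = x
  mul_smul' : ∀ γ δ x, smul (γ * δ) x = smul γ (smul δ x)
  cont : ∀ γ : Γ, @Continuous X X ts ts (smul γ)
  free : ∀ (γ : Γ) (x : X), smul γ x = x → γ = 1

/-- A free continuous action on a Polish space admits a Baire measurable `Ω`-coloring. -/
def FreePolishAction.HasBMCol [Group Γ] (α : FreePolishAction Γ) (Ω : Set (Γ → ℕ)) : Prop :=
  letI := α.ts
  ∃ f : α.X → ℕ, BaireMFun f ∧ {x : α.X | (fun γ : Γ => f (α.smul γ x)) ∈ Ω} ∈ residual α.X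

/-- A free continuous action on a Polish space is generically smooth. -/
def FreePolishAction.IsGenSmooth [Group Γ] (α : FreePolishAction Γ) : Prop :=
  letI := α.ts
  ∃ f : α.X → ℝ, BaireMFun f ∧ ∀ x y : α.X, f x = f y ↔ ∃ γ : Γ, α.smul γ x = y

/-- A subshift is *hard* if every free continuous action of `Γ` on a Polish space that
admits a Baire measurable `Ω`-coloring is generically smooth. -/
def Hard (Γ : Type*) [Group Γ] (Ω : Set (Γ → ℕ)) : Prop :=
  ∀ α : FreePolishAction Γ, α.HasBMCol Ω → α.IsGenSmooth

/-- A subshift is *easy* if every free continuous action of `Γ` on a Polish space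
admits a Baire measurable `Ω`-coloring. -/
def Easy (Γ : Type*) [Group Γ] (Ω : Set (Γ → ℕ)) : Prop :=
  ∀ α : FreePolishAction Γ, α.HasBMCol Ω

/-- Finite partial colorings of `Γ`: partial maps `Γ ⇀ ℕ` with finite domain. -/
abbrev FPC (Γ : Type*) : Type _ := {φ : Γ → Option ℕ // {γ : Γ | φ γ ≠ none}.Finite}

/-- The domain of a finite partial coloring. -/
def domP (φ : FPC Γ) : Set Γ := {γ : Γ | φ.1 γ ≠ none}

/-- `Fin(Ω)`: the set of finite partial colorings extending to an element of `Ω`. -/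
def FinOf (Ω : Set (Γ → ℕ)) : Set (FPC Γ) :=
  {φ | ∃ ω ∈ Ω, ∀ (γ : Γ) (c : ℕ), φ.1 γ = some c → ω γ = c}

/-- `g : FPC Γ → Bool` codes (the set `Fin(Ω)` of) the subshift `Ω`. -/
def CodesSubshift [Group Γ] (g : FPC Γ → Bool) (Ω : Set (Γ → ℕ)) : Prop :=
  IsSubshift Ω ∧ ∀ φ : FPC Γ, g φ = true ↔ φ ∈ FinOf Ω

/-- The shift action of `Γ` on finite partial colorings: `(γ · φ)(δ) = φ(δγ)`. -/
def shiftP [Group Γ] (γ : Γ) (φ : FPC Γ) : FPC Γ :=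
  ⟨fun δ => φ.1 (δ * γ), by
    apply (φ.2.image fun δ => δ * γ⁻¹).subset
    intro δ hδ
    exact ⟨δ * γ, hδ, by simp⟩⟩

/-- The empty partial coloring. -/
def emptyP (Γ : Type*) : FPC Γ := ⟨fun _ => none, by simp⟩

/-- The union (join) of two partial colorings (values of `φ` take precedence). -/
def joinP (φ ψ : FPC Γ) : FPC Γ :=
  ⟨fun δ => match φ.1 δ with | some c => some c | none => ψ.1 δ, by
    apply (φ.2.union ψ.2).subset
    intro δ hδ
    by_cases h : φ.1 δ = none
    · right
      simp only [mem_setOf_eq, h] at hδ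
      exact hδ
    · exact Or.inl h⟩

/-- The union of a finite list of partial colorings. -/
def joinList (l : List (FPC Γ)) : FPC Γ := l.foldr joinP (emptyP Γ)

/-- `φ[γ, r]`: the restriction of `φ` to the closed ball `B(γ, r)`. -/
noncomputable def restrictBall [MetricSpace Γ] (φ : FPC Γ) (γ : Γ) (r : ℝ) : FPC Γ :=
  ⟨fun δ => if dist γ δ ≤ r then φ.1 δ else none, by
    apply φ.2.subset
    intro δ hδ
    by_cases h : dist γ δ ≤ r
    · simp only [mem_setOf_eq, if_pos h] at hδ
      exact hδ
    · simp only [mem_setOf_eq, if_neg h] at hδ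
      exact absurd rfl hδ⟩

/-- `φ ∪ {(γ, c)}`. -/
def insertP [DecidableEq Γ] (φ : FPC Γ) (γ : Γ) (c : ℕ) : FPC Γ :=
  ⟨fun δ => if δ = γ then some c else φ.1 δ, by
    apply (φ.2.insert γ).subset
    intro δ hδ
    by_cases h : δ = γ
    · exact Or.inl h
    · right
      simp only [mem_setOf_eq, if_neg h] at hδ
      exact hδ⟩

/-- The restriction of a total coloring `ω` to a finite set `S`. -/
def restrictTo [DecidableEq Γ] (ω : Γ → ℕ) (S : Finset Γ) : FPC Γ :=
  ⟨fun δ => if δ ∈ S then some (ω δ) else none, by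
    apply S.finite_toSet.subset
    intro δ hδ
    by_cases h : δ ∈ S
    · exact h
    · simp only [mem_setOf_eq, if_neg h] at hδ
      exact absurd rfl hδ⟩

/-- Post-composition of a partial coloring with `ρ : ℕ → ℕ`. -/
def mapP (ρ : ℕ → ℕ) (φ : FPC Γ) : FPC Γ :=
  ⟨fun δ => (φ.1 δ).map ρ, by
    apply φ.2.subset
    intro δ hδ
    intro h
    simp only [mem_setOf_eq, h] at hδ
    exact hδ rfl⟩

/-- `ψ` is a restriction of `φ`. -/
def IsRestrictionOf (ψ φ : FPC Γ) : Prop := ∀ δ : Γ, ψ.1 δ = none ∨ ψ.1 δ = φ.1 δ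

/-- A `Γ`-ideal: a shift-invariant set of finite partial colorings closed under
restrictions. -/
def IsGammaIdeal [Group Γ] (P : Set (FPC Γ)) : Prop :=
  (∀ (γ : Γ), ∀ φ ∈ P, shiftP γ φ ∈ P) ∧
  (∀ φ ∈ P, ∀ ψ : FPC Γ, IsRestrictionOf ψ φ → ψ ∈ P)

/-- An extendable `Γ`-ideal. -/
def IsExtendable [DecidableEq Γ] (P : Set (FPC Γ)) : Prop :=
  ∀ φ ∈ P, ∀ γ : Γ, φ.1 γ = none → ∃ c : ℕ, insertP φ γ c ∈ P

/-- `φ` and `ψ` are `R`-separated: `dist(dom φ, dom ψ) > R φ + R ψ`. -/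
def RSeparated [MetricSpace Γ] (R : FPC Γ → ℝ) (φ ψ : FPC Γ) : Prop :=
  ∀ γ ∈ domP φ, ∀ δ ∈ domP ψ, R φ + R ψ < dist γ δ

/-- The join property of a `Γ`-ideal `P`. -/
def HasJoinProperty [Group Γ] [MetricSpace Γ] (P : Set (FPC Γ)) : Prop :=
  ∃ R : FPC Γ → ℝ, (∀ φ, 0 ≤ R φ) ∧ (∀ (γ : Γ), ∀ φ ∈ P, R (shiftP γ φ) = R φ) ∧
    ∀ l : List (FPC Γ), (∀ φ ∈ l, φ ∈ P) → l.Pairwise (RSeparated R) → joinList l ∈ P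

/-- `P^loc_r`: partial colorings that are `r`-locally in `P`. -/
def LocallyIn [MetricSpace Γ] (P : Set (FPC Γ)) (r : ℕ → ℝ) : Set (FPC Γ) :=
  {φ | ∀ (γ : Γ) (c : ℕ), φ.1 γ = some c → restrictBall φ γ (r c) ∈ P}

/-- A local `Γ`-ideal. -/
def IsLocal [MetricSpace Γ] (P : Set (FPC Γ)) : Prop :=
  ∃ r : ℕ → ℝ, (∀ c, 0 ≤ r c) ∧ P = LocallyIn P r

/-- `Col(P)`: colorings all of whose finite restrictions lie in `P`. -/
def ColOf [DecidableEq Γ] (P : Set (FPC Γ)) : Set (Γ → ℕ) :=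
  {ω | ∀ S : Finset Γ, restrictTo ω S ∈ P}

/-! ### The space of Baire measurable functions -/

/-- Baire measurable functions from `X` to `Y`. -/
abbrev BMFunSub (X Y : Type*) [TopologicalSpace X] [MeasurableSpace Y] :=
  {f : X → Y // BaireMFun f}

/-- Equality on a comeager set. -/
def BFunRel {X Y : Type*} [TopologicalSpace X] [MeasurableSpace Y]
    (f g : BMFunSub X Y) : Prop := {x : X | f.1 x = g.1 x} ∈ residual X

/-- `B(X,Y)`: Baire measurable functions modulo equality on a comeager set. -/
abbrev BFun (X Y : Type*) [TopologicalSpace X] [MeasurableSpace Y] :=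
  Quot (BFunRel (X := X) (Y := Y))

/-- `[U, A]`: the classes of functions `f` with `U ∖ f⁻¹(A)` meager. -/
def forceSet {X Y : Type*} [TopologicalSpace X] [MeasurableSpace Y]
    (U : Set X) (A : Set Y) : Set (BFun X Y) :=
  {F | ∃ f : BMFunSub X Y, Quot.mk BFunRel f = F ∧ IsMeagre (U \ f.1 ⁻¹' A)}

/-- `Σ(X,Y)`: the σ-algebra generated by the sets `[U, A]` for `U` nonempty open
and `A` Borel. -/
def SigmaXY (X Y : Type*) [TopologicalSpace X] [MeasurableSpace Y] :
    MeasurableSpace (BFun X Y) :=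
  MeasurableSpace.generateFrom
    {S | ∃ (U : Set X) (A : Set Y), IsOpen U ∧ U.Nonempty ∧ MeasurableSet A ∧ S = forceSet U A}

/-! ### Auxiliary machinery for the proof of `stmt14` -/

section Aux

variable {Γ : Type*} [Group Γ]

theorem shift_shift (γ δ : Γ) (ω : Γ → ℕ) : shift γ (shift δ ω) = shift (γ * δ) ω := by
  funext ε; simp [shift, mul_assoc]

theorem shift_one' (ω : Γ → ℕ) : shift (1 : Γ) ω = ω := by funext ε; simp [shift]

/-- The shift by `γ` as a homeomorphism of `Γ → ℕ`. -/
def shiftHomeo (γ : Γ) : (Γ → ℕ) ≃ₜ (Γ → ℕ) where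
  toFun := shift γ
  invFun := shift γ⁻¹
  left_inv ω := by rw [shift_shift, inv_mul_cancel, shift_one']
  right_inv ω := by rw [shift_shift, mul_inv_cancel, shift_one']
  continuous_toFun := continuous_pi fun δ => continuous_apply (δ * γ)
  continuous_invFun := continuous_pi fun δ => continuous_apply (δ * γ⁻¹)

theorem isMeagre_preimage_shift (γ : Γ) {s : Set (Γ → ℕ)} (h : IsMeagre s) :
    IsMeagre (shift γ ⁻¹' s) :=
  h.preimage_of_isOpenMap (shiftHomeo γ).continuous (shiftHomeo γ).isOpenMap

/-- The cylinder of a finite partial coloring. -/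
def cylP (ψ : FPC Γ) : Set (Γ → ℕ) := {ω | ∀ γ c, ψ.1 γ = some c → ω γ = c}

theorem isOpen_cylP (ψ : FPC Γ) : IsOpen (cylP ψ) := by
  have h : cylP ψ = Set.pi ↑ψ.2.toFinset (fun γ => {n | ψ.1 γ = some n}) := by
    ext ω
    simp only [cylP, Set.mem_setOf_eq, Set.mem_pi, Set.Finite.coe_toFinset]
    constructor
    · intro h γ hγ
      obtain ⟨c, hc⟩ := Option.ne_none_iff_exists'.mp hγ
      rw [hc, h γ c hc]
    · intro h γ c hc
      have hγ : γ ∈ {γ | ψ.1 γ ≠ none} := by rw [Set.mem_setOf_eq, hc]; simp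
      have := h γ hγ
      rw [hc] at this
      exact (Option.some_inj.mp this).symm
  rw [h]
  exact isOpen_set_pi ψ.2.toFinset.finite_toSet (fun _ _ => isOpen_discrete _)

theorem nonempty_cylP (ψ : FPC Γ) : (cylP ψ).Nonempty :=
  ⟨fun γ => (ψ.1 γ).getD 0, fun γ c hc => by simp [hc]⟩

theorem cylP_inter_nonempty [Countable Γ] (ψ : FPC Γ) {m : Set (Γ → ℕ)} (hm : IsMeagre m) :
    (cylP ψ ∩ mᶜ).Nonempty := by
  haveI : BaireSpace (Γ → ℕ) := by infer_instance
  exact (dense_of_mem_residual hm).inter_open_nonempty _ (isOpen_cylP ψ) (nonempty_cylP ψ)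

theorem not_isMeagre_cylP [Countable Γ] (ψ : FPC Γ) : ¬ IsMeagre (cylP ψ) := by
  intro h
  obtain ⟨ω, h1, h2⟩ := cylP_inter_nonempty ψ h
  exact h2 h1

/-- `ψ` forces the output at `γ` to be `c`. -/
def Forces (f : (Γ → ℕ) → ℕ) (ψ : FPC Γ) (γ : Γ) (c : ℕ) : Prop :=
  IsMeagre (cylP ψ \ {ω | f (shift γ ω) = c})

theorem Forces.mono {f : (Γ → ℕ) → ℕ} {ψ ψ' : FPC Γ} {γ : Γ} {c : ℕ}
    (h : Forces f ψ γ c) (hsub : cylP ψ' ⊆ cylP ψ) : Forces f ψ' γ c :=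
  Filter.mem_of_superset h (compl_subset_compl.mpr (diff_subset_diff_left hsub))

/-- `ψ` is a witness (forcing pattern) for the partial coloring `φ`. -/
def Wit (f : (Γ → ℕ) → ℕ) (φ ψ : FPC Γ) : Prop :=
  ∀ γ c, φ.1 γ = some c → Forces f ψ γ c

theorem cylP_shiftP (γ : Γ) (ψ : FPC Γ) : cylP (shiftP γ ψ) = shift γ⁻¹ ⁻¹' cylP ψ := by
  ext ω
  constructor
  · intro h δ c hc
    have := h (δ * γ⁻¹) c (by simpa [shiftP, inv_mul_cancel_right] using hc)
    simpa [shift] using this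
  · intro h δ c hc
    have := h (δ * γ) c hc
    simpa [shift, mul_assoc] using this

theorem shiftSet_eq (γ δ : Γ) (f : (Γ → ℕ) → ℕ) (c : ℕ) :
    {ω : Γ → ℕ | f (shift δ ω) = c} = shift γ⁻¹ ⁻¹' {ω | f (shift (δ * γ) ω) = c} := by
  ext ω
  simp only [Set.mem_setOf_eq, Set.mem_preimage]
  rw [shift_shift, mul_assoc, mul_inv_cancel, mul_one]

variable [MetricSpace Γ]

/-- The set of natural radii `n` admitting a witness for `φ` with domain in the
`n`-neighborhood of `dom φ`. -/
def goodN (f : (Γ → ℕ) → ℕ) (φ : FPC Γ) : Set ℕ :=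
  {n | ∃ ψ : FPC Γ, Wit f φ ψ ∧ ∀ δ ∈ domP ψ, ∃ γ ∈ domP φ, dist γ δ ≤ (n : ℝ)}

/-- The ideal of generically forced partial colorings. -/
def Pf (f : (Γ → ℕ) → ℕ) : Set (FPC Γ) := {φ | (goodN f φ).Nonempty}

/-- The radius function. -/
noncomputable def Rf (f : (Γ → ℕ) → ℕ) (φ : FPC Γ) : ℝ := ((sInf (goodN f φ) : ℕ) : ℝ)

theorem wit_shiftP (hinv : ∀ γ δ g : Γ, dist (γ * g) (δ * g) = dist γ δ)
    (f : (Γ → ℕ) → ℕ) (γ : Γ) {φ : FPC Γ} {n : ℕ} (h : n ∈ goodN f φ) :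
    n ∈ goodN f (shiftP γ φ) := by
  obtain ⟨ψ, hw, hd⟩ := h
  refine ⟨shiftP γ ψ, ?_, ?_⟩
  · intro δ c hc
    have hF := hw (δ * γ) c hc
    unfold Forces at hF ⊢
    rw [cylP_shiftP, shiftSet_eq γ δ f c, ← Set.preimage_diff]
    exact isMeagre_preimage_shift _ hF
  · intro δ hδ
    have hδ' : δ * γ ∈ domP ψ := hδ
    obtain ⟨γ', hγ', hdist⟩ := hd (δ * γ) hδ'
    refine ⟨γ' * γ⁻¹, ?_, ?_⟩
    · show (shiftP γ φ).1 (γ' * γ⁻¹) ≠ none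
      show φ.1 (γ' * γ⁻¹ * γ) ≠ none
      rw [inv_mul_cancel_right]; exact hγ'
    · calc dist (γ' * γ⁻¹) δ = dist (γ' * γ⁻¹ * γ) (δ * γ) := (hinv _ _ γ).symm
        _ = dist γ' (δ * γ) := by rw [inv_mul_cancel_right]
        _ ≤ (n : ℝ) := hdist

theorem shiftP_shiftP (γ δ : Γ) (φ : FPC Γ) : shiftP γ (shiftP δ φ) = shiftP (γ * δ) φ := by
  apply Subtype.ext; funext ε; simp [shiftP, mul_assoc]

theorem shiftP_one (φ : FPC Γ) : shiftP (1 : Γ) φ = φ := by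
  apply Subtype.ext; funext ε; simp [shiftP]

theorem goodN_shiftP (hinv : ∀ γ δ g : Γ, dist (γ * g) (δ * g) = dist γ δ)
    (f : (Γ → ℕ) → ℕ) (γ : Γ) (φ : FPC Γ) : goodN f (shiftP γ φ) = goodN f φ := by
  apply Set.Subset.antisymm
  · intro n hn
    have := wit_shiftP hinv f γ⁻¹ hn
    rwa [shiftP_shiftP, inv_mul_cancel, shiftP_one] at this
  · exact fun n hn => wit_shiftP hinv f γ hn

theorem exists_nat_bound (γ₀ : Γ) (ψ : FPC Γ) :
    ∃ m : ℕ, ∀ δ ∈ domP ψ, dist γ₀ δ ≤ (m : ℝ) := by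
  obtain ⟨r, hr⟩ := (ψ.2.image (dist γ₀)).bddAbove
  exact ⟨⌈r⌉₊, fun δ hδ =>
    le_trans (hr (Set.mem_image_of_mem _ hδ)) (Nat.le_ceil r)⟩

theorem joinList_cons (a : FPC Γ) (t : List (FPC Γ)) :
    joinList (a :: t) = joinP a (joinList t) := rfl

theorem joinP_eval_some {a b : FPC Γ} {δ : Γ} {c : ℕ} (h : a.1 δ = some c) :
    (joinP a b).1 δ = some c := by simp [joinP, h]

theorem joinP_eval_none {a b : FPC Γ} {δ : Γ} (h : a.1 δ = none) :
    (joinP a b).1 δ = b.1 δ := by simp [joinP, h]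

theorem joinList_some {l : List (FPC Γ)} {δ : Γ} {c : ℕ}
    (h : (joinList l).1 δ = some c) : ∃ φ ∈ l, φ.1 δ = some c := by
  induction l with
  | nil => simp [joinList, emptyP] at h
  | cons a t ih =>
    rw [joinList_cons] at h
    rcases ha : a.1 δ with _ | c'
    · rw [joinP_eval_none ha] at h
      obtain ⟨φ, hφ, h2⟩ := ih h
      exact ⟨φ, List.mem_cons_of_mem _ hφ, h2⟩
    · rw [joinP_eval_some ha] at h
      exact ⟨a, List.mem_cons_self, by rw [ha, h]⟩

theorem joinList_ne_none {l : List (FPC Γ)} {φ : FPC Γ} (hφ : φ ∈ l) {δ : Γ}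
    (h : φ.1 δ ≠ none) : (joinList l).1 δ ≠ none := by
  induction l with
  | nil => simp at hφ
  | cons a t ih =>
    rw [joinList_cons]
    rcases ha : a.1 δ with _ | c'
    · rcases List.mem_cons.mp hφ with rfl | hm
      · exact absurd ha h
      · rw [joinP_eval_none ha]; exact ih hm
    · rw [joinP_eval_some ha]; simp

theorem cylP_joinP_left (a b : FPC Γ) : cylP (joinP a b) ⊆ cylP a := by
  intro ω h δ c hc
  exact h δ c (joinP_eval_some hc)

/-- Domain disjointness of two finite partial colorings. -/
def DomDisj (a b : FPC Γ) : Prop := ∀ δ, a.1 δ ≠ none → b.1 δ = none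

theorem cylP_joinP_right {a b : FPC Γ} (hd : ∀ δ, a.1 δ ≠ none → b.1 δ = none) :
    cylP (joinP a b) ⊆ cylP b := by
  intro ω h δ c hc
  have ha : a.1 δ = none := by
    by_contra hne
    rw [hd δ hne] at hc
    exact Option.some_ne_none _ hc.symm
  exact h δ c (by rw [joinP_eval_none ha]; exact hc)

theorem cylP_joinList {l : List (FPC Γ)} (hp : l.Pairwise DomDisj) {ψ : FPC Γ}
    (hψ : ψ ∈ l) : cylP (joinList l) ⊆ cylP ψ := by
  induction l with
  | nil => simp at hψ
  | cons a t ih =>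
    rw [List.pairwise_cons] at hp
    rw [joinList_cons]
    rcases List.mem_cons.mp hψ with rfl | hm
    · exact cylP_joinP_left _ _
    · refine (cylP_joinP_right ?_).trans (ih hp.2 hm)
      intro δ ha
      by_contra hb
      obtain ⟨c, hc⟩ := Option.ne_none_iff_exists'.mp hb
      obtain ⟨φ, hφ, h2⟩ := joinList_some hc
      rw [hp.1 φ hφ δ ha] at h2
      exact Option.some_ne_none _ h2.symm

end Aux

/-- If the shift action admits a Baire measurable `P`-coloring, then `P` contains an
extendable `Γ`-ideal with the join property. -/
theorem stmt14 {Γ : Type*} [Group Γ] [Countable Γ] [Infinite Γ] [DecidableEq Γ]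
    [MetricSpace Γ]
    (hinv : ∀ γ δ g : Γ, dist (γ * g) (δ * g) = dist γ δ)
    (hproper : ∀ (γ : Γ) (r : ℝ), (Metric.closedBall γ r).Finite)
    (P : Set (FPC Γ)) (hP : IsGammaIdeal P)
    (hcol : ShiftHasBMColoring Γ (ColOf P)) :
    ∃ P' : Set (FPC Γ), P' ⊆ P ∧ IsGammaIdeal P' ∧ IsExtendable P' ∧
      HasJoinProperty P' := by
  classical
  obtain ⟨f, hBM, hres⟩ := hcol
  refine ⟨Pf f, ?_, ⟨?_, ?_⟩, ?_, ?_⟩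
  · -- Soundness: Pf f ⊆ P
    intro φ hφ
    obtain ⟨n, ψ, hw, -⟩ := hφ
    set G : Set (Γ → ℕ) := {ω : Γ → ℕ | (fun γ : Γ => f (shift γ ω)) ∈ ColOf P} with hG
    set T : Finset Γ := φ.2.toFinset with hT
    set M : Set (Γ → ℕ) :=
      (⋃ γ ∈ T, (cylP ψ \ {ω | some (f (shift γ ω)) = φ.1 γ})) ∪ Gᶜ with hMdef
    have hM : IsMeagre M := by
      rw [hMdef, IsMeagre, Set.compl_union, compl_compl]
      refine Filter.inter_mem ?_ hres
      rw [Set.compl_iUnion₂]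
      rw [Filter.biInter_finset_mem]
      intro γ hγ
      have hγd : φ.1 γ ≠ none := φ.2.mem_toFinset.mp hγ
      obtain ⟨c, hc⟩ := Option.ne_none_iff_exists'.mp hγd
      have heq : {ω : Γ → ℕ | some (f (shift γ ω)) = φ.1 γ}
          = {ω | f (shift γ ω) = c} := by
        ext ω; simp [hc]
      show (cylP ψ \ {ω | some (f (shift γ ω)) = φ.1 γ})ᶜ ∈ residual _
      rw [heq]
      exact hw γ c hc
    obtain ⟨ω, hωcyl, hωM⟩ := cylP_inter_nonempty ψ hM
    rw [Set.mem_compl_iff, hMdef, Set.mem_union, not_or] at hωM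
    obtain ⟨hω1, hω2⟩ := hωM
    have hωG : ω ∈ G := by rwa [Set.notMem_compl_iff] at hω2
    simp only [Set.mem_iUnion, not_exists] at hω1
    have hπ : (fun γ : Γ => f (shift γ ω)) ∈ ColOf P := hωG
    have hPT : restrictTo (fun γ : Γ => f (shift γ ω)) T ∈ P := hπ T
    refine hP.2 _ hPT φ ?_
    intro δ
    rcases hδ : φ.1 δ with _ | c
    · exact Or.inl rfl
    · right
      have hδT : δ ∈ T := φ.2.mem_toFinset.mpr (by rw [Set.mem_setOf_eq, hδ]; simp)
      have h3 := hω1 δ hδT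
      rw [Set.mem_diff, not_and, not_not] at h3
      have h4 : some (f (shift δ ω)) = φ.1 δ := h3 hωcyl
      show some c = if δ ∈ T then some (f (shift δ ω)) else none
      rw [if_pos hδT, h4, hδ]
  · -- shift invariance
    intro γ φ hφ
    obtain ⟨n, hn⟩ := hφ
    exact ⟨n, wit_shiftP hinv f γ hn⟩
  · -- restriction closure
    intro φ hφ ψ₂ hr
    by_cases hall : ∀ δ, ψ₂.1 δ = none
    · refine ⟨0, emptyP Γ, ?_, ?_⟩
      · intro γ c hc
        rw [hall γ] at hc
        exact absurd hc.symm (Option.some_ne_none _)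
      · intro δ hδ
        exact absurd rfl hδ
    · push_neg at hall
      obtain ⟨γ₀, hγ₀⟩ := hall
      obtain ⟨n, ψ, hw, hd⟩ := hφ
      obtain ⟨m, hm⟩ := exists_nat_bound γ₀ ψ
      refine ⟨m, ψ, ?_, ?_⟩
      · intro γ c hc
        rcases hr γ with h | h
        · rw [h] at hc; exact absurd hc.symm (Option.some_ne_none _)
        · exact hw γ c (h ▸ hc)
      · intro δ hδ
        exact ⟨γ₀, hγ₀, hm δ hδ⟩
  · -- extendability
    intro φ hφ γ₀ hγ₀
    obtain ⟨n, ψ, hw, -⟩ := hφ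
    have h1 : ∃ c, ¬ IsMeagre (cylP ψ ∩ {ω | f (shift γ₀ ω) = c}) := by
      by_contra hcon
      push_neg at hcon
      apply not_isMeagre_cylP ψ
      have hsub : cylP ψ ⊆ ⋃ c : ℕ, (cylP ψ ∩ {ω | f (shift γ₀ ω) = c}) := fun ω hω =>
        Set.mem_iUnion.mpr ⟨f (shift γ₀ ω), hω, rfl⟩
      exact (isMeagre_iUnion hcon).mono hsub
    obtain ⟨c, hc⟩ := h1
    obtain ⟨U, hUopen, hUm⟩ := hBM {c} (measurableSet_singleton c)
    set S : Set (Γ → ℕ) := {ω : Γ → ℕ | f (shift γ₀ ω) = c} with hSdef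
    set U' : Set (Γ → ℕ) := shift γ₀ ⁻¹' U with hU'def
    have hU'open : IsOpen U' := hUopen.preimage (shiftHomeo γ₀).continuous
    have hsym : IsMeagre (symmDiff S U') := by
      have hpre : S = shift γ₀ ⁻¹' (f ⁻¹' {c}) := by
        ext ω; simp [hSdef]
      have heq : symmDiff S U' = shift γ₀ ⁻¹' (symmDiff (f ⁻¹' {c}) U) := by
        rw [Set.symmDiff_def, Set.symmDiff_def, Set.preimage_union, Set.preimage_diff,
          Set.preimage_diff, hpre, hU'def]
      rw [heq]
      exact isMeagre_preimage_shift _ hUm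
    have h2 : (cylP ψ ∩ U').Nonempty := by
      rcases Set.eq_empty_or_nonempty (cylP ψ ∩ U') with he | hne
      · exfalso
        apply hc
        refine hsym.mono ?_
        intro ω hω
        obtain ⟨hω1, hω2⟩ := hω
        rw [Set.mem_symmDiff]
        left
        exact ⟨hω2, fun hU => Set.eq_empty_iff_forall_notMem.mp he ω ⟨hω1, hU⟩⟩
      · exact hne
    obtain ⟨ω₁, hω₁⟩ := h2
    obtain ⟨I, u, hu, hsub⟩ :=
      isOpen_pi_iff.mp ((isOpen_cylP ψ).inter hU'open) ω₁ hω₁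
    set ψ' : FPC Γ := restrictTo ω₁ I with hψ'def
    have hcyl' : cylP ψ' ⊆ cylP ψ ∩ U' := by
      intro ω hω
      apply hsub
      rw [Set.mem_pi]
      intro i hi
      have hiI : i ∈ I := hi
      have hval : ω i = ω₁ i := hω i (ω₁ i) (by simp [hψ'def, restrictTo, hiI])
      rw [hval]
      exact (hu i hiI).2
    have hwit' : Wit f (insertP φ γ₀ c) ψ' := by
      intro δ c' hc'
      by_cases hδ : δ = γ₀
      · subst hδ
        have hcc : c' = c := by
          have : (if δ = δ then some c else φ.1 δ) = some c' := hc'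
          simpa using this.symm
        subst hcc
        refine hsym.mono ?_
        intro ω hω
        obtain ⟨h1, h2⟩ := hω
        rw [Set.mem_symmDiff]
        right
        exact ⟨(hcyl' h1).2, h2⟩
      · have hφδ : φ.1 δ = some c' := by
          have : (if δ = γ₀ then some c else φ.1 δ) = some c' := hc'
          rwa [if_neg hδ] at this
        exact (hw δ c' hφδ).mono (hcyl'.trans Set.inter_subset_left)
    obtain ⟨m, hm⟩ := exists_nat_bound γ₀ ψ'
    refine ⟨c, m, ψ', hwit', fun δ hδ => ⟨γ₀, ?_, hm δ hδ⟩⟩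
    show (insertP φ γ₀ c).1 γ₀ ≠ none
    simp [insertP]
  · -- join property
    refine ⟨Rf f, fun φ => Nat.cast_nonneg _, ?_, ?_⟩
    · intro γ φ _
      unfold Rf
      rw [goodN_shiftP hinv f γ φ]
    · intro l hl hsep
      set w : FPC Γ → FPC Γ := fun φ =>
        if h : φ ∈ Pf f then (Nat.sInf_mem h).choose else emptyP Γ with hwdef
      have hww : ∀ φ ∈ Pf f, Wit f φ (w φ) ∧
          ∀ δ ∈ domP (w φ), ∃ γ ∈ domP φ, dist γ δ ≤ Rf f φ := by
        intro φ h
        have : w φ = (Nat.sInf_mem h).choose := by rw [hwdef]; exact dif_pos h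
        rw [this]
        exact (Nat.sInf_mem h).choose_spec
      have hpair : (l.map w).Pairwise DomDisj := by
        rw [List.pairwise_map]
        refine hsep.imp_of_mem ?_
        intro a b ha hb hR δ hδa
        by_contra hδb
        obtain ⟨γ₁, hγ₁, hd₁⟩ := (hww a (hl a ha)).2 δ hδa
        obtain ⟨γ₂, hγ₂, hd₂⟩ := (hww b (hl b hb)).2 δ hδb
        have hlt := hR γ₁ hγ₁ γ₂ hγ₂
        have htri : dist γ₁ γ₂ ≤ dist γ₁ δ + dist δ γ₂ := dist_triangle _ _ _
        have hcomm : dist δ γ₂ = dist γ₂ δ := dist_comm _ _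
        linarith
      refine ⟨(l.map (fun φ => sInf (goodN f φ))).sum, joinList (l.map w), ?_, ?_⟩
      · intro γ c hc
        obtain ⟨φ, hφl, hφc⟩ := joinList_some hc
        exact ((hww φ (hl φ hφl)).1 γ c hφc).mono
          (cylP_joinList hpair (List.mem_map_of_mem (f := w) hφl))
      · intro δ hδ
        obtain ⟨c', hc'⟩ := Option.ne_none_iff_exists'.mp hδ
        obtain ⟨ψw, hψw, hval⟩ := joinList_some hc'
        obtain ⟨φ, hφl, rfl⟩ := List.mem_map.mp hψw
        have hδw : δ ∈ domP (w φ) := by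
          show (w φ).1 δ ≠ none
          rw [hval]; simp
        obtain ⟨γ, hγ, hdist⟩ := (hww φ (hl φ hφl)).2 δ hδw
        refine ⟨γ, joinList_ne_none hφl hγ, hdist.trans ?_⟩
        have hle : sInf (goodN f φ) ≤ (l.map (fun φ => sInf (goodN f φ))).sum :=
          List.single_le_sum (fun _ _ => Nat.zero_le _) _
            (List.mem_map_of_mem hφl)
        exact Nat.cast_le.mpr hle

end DescColor
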